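/- Let δ > 0, let K0, K1 be positive integers, let x_1,…,x_{K0}, y_1,…,y_{K1} ∈ ℝ^d, let M ∈ {0,1}^{K0×K1} be a binary mask with ‖x_i − y_j‖ < πδ whenever M_ij = 1, and let μ0 ∈ ℝ_{>0}^{K0}, μ1 ∈ ℝ_{>0}^{K1}. Suppose γ* is a nonnegative M-supported K0×K1 matrix that minimizes the masked OET objective F(γ) = Σ_{ij} C_ij γ_ij + KL(γ𝟙‖μ0) + KL(γᵀ𝟙‖μ1) over all nonnegative M-supported matrices, and that every row sum s_i = Σ_j γ*_ij and every column sum t_j = Σ_i γ*_ij of γ* is positive. Define γ0_ij = (γ*_ij / s_i)·μ0_i and γ1_ij = (γ*_ij / t_j)·μ1_j. Then (γ0, γ1) minimizes the static supervised WFR objective G(γ0′, γ1′) = Σ_{ij} 2δ²( γ0′_ij + γ1′_ij − 2√(γ0′_ij γ1′_ij)·cos̄(‖x_i − y_j‖/(2δ)) ) over all (γ0′, γ1′) in the supervised feasible set Γ_M(μ0, μ1). -/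

import Mathlib

open scoped BigOperators

/-- `cos̄(x) = cos(min(x, π/2))`. -/
noncomputable def cosbar (t : ℝ) : ℝ := Real.cos (min t (Real.pi / 2))

/-- Generalized Kullback–Leibler divergence between finite nonnegative vectors. -/
noncomputable def KLvec {K : ℕ} (a b : Fin K → ℝ) : ℝ :=
  ∑ k, (a k * Real.log (a k / b k) - a k + b k)

/-- Row sums of a matrix. -/
def rowSum {K0 K1 : ℕ} (γ : Fin K0 → Fin K1 → ℝ) (i : Fin K0) : ℝ := ∑ j, γ i j

/-- Column sums of a matrix. -/
def colSum {K0 K1 : ℕ} (γ : Fin K0 → Fin K1 → ℝ) (j : Fin K1) : ℝ := ∑ i, γ i j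

/-- The masked OET objective `F(γ) = Σ C_ij γ_ij + KL(γ1‖μ0) + KL(γᵀ1‖μ1)`. -/
noncomputable def OETobj {d K0 K1 : ℕ} (δ : ℝ)
    (x : Fin K0 → EuclideanSpace ℝ (Fin d)) (y : Fin K1 → EuclideanSpace ℝ (Fin d))
    (μ0 : Fin K0 → ℝ) (μ1 : Fin K1 → ℝ) (γ : Fin K0 → Fin K1 → ℝ) : ℝ :=
  (∑ i, ∑ j, (-2 * Real.log (cosbar (‖x i - y j‖ / (2 * δ)))) * γ i j)
    + KLvec (rowSum γ) μ0 + KLvec (colSum γ) μ1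

/-- The static supervised WFR objective
`G(γ0, γ1) = Σ 2δ²(γ0_ij + γ1_ij − 2√(γ0_ij γ1_ij) cos̄(‖x_i − y_j‖/(2δ)))`. -/
noncomputable def WFRobj {d K0 K1 : ℕ} (δ : ℝ)
    (x : Fin K0 → EuclideanSpace ℝ (Fin d)) (y : Fin K1 → EuclideanSpace ℝ (Fin d))
    (γ0 γ1 : Fin K0 → Fin K1 → ℝ) : ℝ :=
  ∑ i, ∑ j, 2 * δ ^ 2 *
    (γ0 i j + γ1 i j
      - 2 * Real.sqrt (γ0 i j * γ1 i j) * cosbar (‖x i - y j‖ / (2 * δ)))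

/-- Membership in the supervised feasible set `Γ_M(μ0, μ1)`. -/
def SupervisedFeasible {K0 K1 : ℕ} (M : Fin K0 → Fin K1 → Bool)
    (μ0 : Fin K0 → ℝ) (μ1 : Fin K1 → ℝ) (γ0 γ1 : Fin K0 → Fin K1 → ℝ) : Prop :=
  (∀ i j, 0 ≤ γ0 i j) ∧ (∀ i j, 0 ≤ γ1 i j) ∧
  (∀ i, rowSum γ0 i = μ0 i) ∧ (∀ j, colSum γ1 j = μ1 j) ∧
  (∀ i j, M i j = false → γ0 i j = 0 ∧ γ1 i j = 0)

/- ### Auxiliary lemmas -/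


noncomputable def klterm (a b : ℝ) : ℝ := a * Real.log (a / b) - a + b

lemma klterm_ge (a b l : ℝ) (ha : 0 ≤ a) (hb : 0 ≤ b) (hl : 0 < l)
    (h : b = 0 → a = 0) : a * Real.log l - l * b + b ≤ klterm a b := by
  rcases eq_or_lt_of_le ha with h0 | ha
  · simp only [klterm, ← h0, zero_mul, zero_sub, neg_add_eq_sub, zero_div]
    nlinarith
  · have hb' : 0 < b := by
      rcases eq_or_lt_of_le hb with e | e
      · exact absurd (h e.symm) (ne_of_gt ha)
      · exact e
    have key : Real.log (l * b / a) ≤ l * b / a - 1 :=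
      Real.log_le_sub_one_of_pos (by positivity)
    have hlog : Real.log (a / b) = Real.log l - Real.log (l * b / a) := by
      rw [Real.log_div (ne_of_gt ha) hb'.ne', Real.log_div (by positivity) ha.ne',
          Real.log_mul hl.ne' hb'.ne']
      ring
    have h1 : a * Real.log (l * b / a) ≤ a * (l * b / a - 1) :=
      mul_le_mul_of_nonneg_left key ha.le
    have h2 : a * (l * b / a) = l * b := by field_simp
    rw [klterm, hlog]
    nlinarith

lemma klterm_sum_le {n : ℕ} (a b : Fin n → ℝ) (ha : ∀ k, 0 ≤ a k) (hb : ∀ k, 0 ≤ b k)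
    (h : ∀ k, b k = 0 → a k = 0) (hB : 0 < ∑ k, b k) :
    klterm (∑ k, a k) (∑ k, b k) ≤ ∑ k, klterm (a k) (b k) := by
  have hA : 0 ≤ ∑ k, a k := Finset.sum_nonneg fun k _ => ha k
  rcases eq_or_lt_of_le hA with h0 | hA
  · have hz : ∀ k ∈ Finset.univ, a k = 0 := by
      intro k _
      have h1 := Finset.single_le_sum (f := a) (fun k _ => ha k) (Finset.mem_univ k)
      have := ha k
      linarith
    have hsa : ∑ k, a k = 0 := by
      rw [Finset.sum_congr rfl hz, Finset.sum_const, smul_zero]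
    rw [hsa]
    simp only [klterm]
    have : ∀ k ∈ Finset.univ, (a k * Real.log (a k / b k) - a k + b k) = b k := by
      intro k hk
      rw [hz k hk]; simp
    rw [Finset.sum_congr rfl this]
    simp
  · set A := ∑ k, a k with hAdef
    set B := ∑ k, b k with hBdef
    have hl : 0 < A / B := div_pos hA hB
    calc klterm A B = ∑ k, (a k * Real.log (A / B) - (A / B) * b k + b k) := by
          rw [Finset.sum_add_distrib, Finset.sum_sub_distrib, ← Finset.sum_mul,
              ← Finset.mul_sum, klterm]
          rw [← hAdef, ← hBdef]
          field_simp
      _ ≤ ∑ k, klterm (a k) (b k) :=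
          Finset.sum_le_sum fun k _ => klterm_ge (a k) (b k) (A/B) (ha k) (hb k) hl (h k)

lemma klterm_sqrt (p q cc : ℝ) (hp : 0 ≤ p) (hq : 0 ≤ q) (hcc : 0 ≤ cc) :
    (-2 * Real.log cc) * (Real.sqrt (p*q) * cc) + klterm (Real.sqrt (p*q)*cc) p
      + klterm (Real.sqrt (p*q)*cc) q = p + q - 2 * Real.sqrt (p*q) * cc := by
  have hann : 0 ≤ Real.sqrt (p*q) * cc := by positivity
  rcases eq_or_lt_of_le hann with h0 | hapos
  · rw [← h0]
    simp [klterm]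
    linarith [congrArg (2 * ·) h0]
  · have hccpos : 0 < cc := by
      rcases eq_or_lt_of_le hcc with e | e
      · rw [← e, mul_zero] at hapos; exact absurd hapos (lt_irrefl 0)
      · exact e
    have hsq : 0 < Real.sqrt (p*q) := by
      rcases eq_or_lt_of_le (Real.sqrt_nonneg (p*q)) with e | e
      · rw [← e, zero_mul] at hapos; exact absurd hapos (lt_irrefl 0)
      · exact e
    have hpq : 0 < p * q := Real.sqrt_pos.mp hsq
    have hppos : 0 < p := by
      rcases eq_or_lt_of_le hp with e | e
      · rw [← e, zero_mul] at hpq; exact absurd hpq (lt_irrefl 0)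
      · exact e
    have hqpos : 0 < q := by nlinarith
    set a := Real.sqrt (p*q) * cc with hadef
    have hapos' : 0 < a := hapos
    have hsqsq : Real.sqrt (p*q) ^ 2 = p * q := Real.sq_sqrt hpq.le
    have hlog : Real.log (a / p) + Real.log (a / q) = 2 * Real.log cc := by
      rw [← Real.log_mul (by positivity) (by positivity)]
      have ha2 : a * a = p * q * cc ^ 2 := by
        have : Real.sqrt (p*q) * Real.sqrt (p*q) = p * q := by
          nlinarith [hsqsq]
        rw [hadef]; nlinarith [this]
      have : a / p * (a / q) = cc ^ 2 := by
        rw [div_mul_div_comm, ha2]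
        field_simp
      rw [this, Real.log_pow]
      push_cast; ring
    simp only [klterm]
    nlinarith [hlog]

lemma step1_pointwise (g s t m0 m1 cc : ℝ) (hg : 0 ≤ g) (hs : 0 < s) (ht : 0 < t)
    (hm0 : 0 < m0) (hm1 : 0 < m1) (hcc : 0 ≤ cc) (hccpos : 0 < g → 0 < cc) :
    g/s*m0 + g/t*m1 - 2 * Real.sqrt ((g/s*m0) * (g/t*m1)) * cc
      ≤ (-2 * Real.log cc) * g + (g * Real.log (s/m0) - g + g/s*m0)
        + (g * Real.log (t/m1) - g + g/t*m1) := by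
  rcases eq_or_lt_of_le hg with h0 | hg
  · rw [← h0]; simp
  · have hc := hccpos hg
    set r := m0 * m1 / (s * t) with hr
    have hrpos : 0 < r := by positivity
    have hprod : (g/s*m0) * (g/t*m1) = g^2 * r := by
      rw [hr]; field_simp
    have hsqrt : Real.sqrt ((g/s*m0) * (g/t*m1)) = g * Real.sqrt r := by
      rw [hprod, Real.sqrt_mul (by positivity), Real.sqrt_sq hg.le]
    have hsrpos : 0 < Real.sqrt r := Real.sqrt_pos.mpr hrpos
    set u := cc * Real.sqrt r with hu
    have hupos : 0 < u := by positivity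
    have hlogu : Real.log u ≤ u - 1 := Real.log_le_sub_one_of_pos hupos
    have hlogsplit : Real.log u = Real.log cc + Real.log (Real.sqrt r) :=
      Real.log_mul hc.ne' hsrpos.ne'
    have hlogr : Real.log (s/m0) + Real.log (t/m1) = - (2 * Real.log (Real.sqrt r)) := by
      rw [Real.log_div hs.ne' hm0.ne', Real.log_div ht.ne' hm1.ne']
      have h2 : Real.log (Real.sqrt r) = Real.log r / 2 := Real.log_sqrt hrpos.le
      have h3 : Real.log r = Real.log m0 + Real.log m1 - (Real.log s + Real.log t) := by
        rw [hr, Real.log_div (by positivity) (by positivity),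
            Real.log_mul hm0.ne' hm1.ne', Real.log_mul hs.ne' ht.ne']
      rw [h2, h3]; ring
    rw [hsqrt]
    have key : 2 * g * Real.log u ≤ 2 * g * u - 2 * g := by nlinarith
    nlinarith [key, hlogsplit, hlogr]

theorem oet_minimizer_yields_wfr_minimizer
    {d K0 K1 : ℕ} (hK0 : 0 < K0) (hK1 : 0 < K1)
    (δ : ℝ) (hδ : 0 < δ)
    (x : Fin K0 → EuclideanSpace ℝ (Fin d)) (y : Fin K1 → EuclideanSpace ℝ (Fin d))
    (M : Fin K0 → Fin K1 → Bool)
    (hM : ∀ i j, M i j = true → ‖x i - y j‖ < Real.pi * δ)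
    (μ0 : Fin K0 → ℝ) (μ1 : Fin K1 → ℝ)
    (hμ0 : ∀ i, 0 < μ0 i) (hμ1 : ∀ j, 0 < μ1 j)
    (γstar : Fin K0 → Fin K1 → ℝ)
    (hγnn : ∀ i j, 0 ≤ γstar i j)
    (hγsupp : ∀ i j, M i j = false → γstar i j = 0)
    (hopt : ∀ γ' : Fin K0 → Fin K1 → ℝ, (∀ i j, 0 ≤ γ' i j) →
      (∀ i j, M i j = false → γ' i j = 0) →
      OETobj δ x y μ0 μ1 γstar ≤ OETobj δ x y μ0 μ1 γ')
    (hrow : ∀ i, 0 < rowSum γstar i) (hcol : ∀ j, 0 < colSum γstar j)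
    (γ0 γ1 : Fin K0 → Fin K1 → ℝ)
    (hγ0 : ∀ i j, γ0 i j = γstar i j / rowSum γstar i * μ0 i)
    (hγ1 : ∀ i j, γ1 i j = γstar i j / colSum γstar j * μ1 j) :
    SupervisedFeasible M μ0 μ1 γ0 γ1 ∧
      ∀ γ0' γ1' : Fin K0 → Fin K1 → ℝ, SupervisedFeasible M μ0 μ1 γ0' γ1' →
        WFRobj δ x y γ0 γ1 ≤ WFRobj δ x y γ0' γ1' := by
    classical
  set c : Fin K0 → Fin K1 → ℝ := fun i j => cosbar (‖x i - y j‖ / (2 * δ)) with hcdef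
  have hpi : (0:ℝ) < Real.pi := Real.pi_pos
  have hcnn : ∀ i j, 0 ≤ c i j := by
    intro i j
    have ht : (0:ℝ) ≤ ‖x i - y j‖ / (2 * δ) := by positivity
    apply Real.cos_nonneg_of_mem_Icc
    constructor
    · apply le_min <;> linarith
    · exact min_le_right _ _
  have hcpos : ∀ i j, M i j = true → 0 < c i j := by
    intro i j hMij
    have ht : (0:ℝ) ≤ ‖x i - y j‖ / (2 * δ) := by positivity
    have hlt : ‖x i - y j‖ / (2 * δ) < Real.pi / 2 := by
      rw [div_lt_div_iff₀ (by linarith) (by norm_num)]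
      have := hM i j hMij
      nlinarith
    show 0 < cosbar (‖x i - y j‖ / (2 * δ))
    unfold cosbar
    rw [min_eq_left hlt.le]
    exact Real.cos_pos_of_mem_Ioo ⟨by linarith, hlt⟩
  -- feasibility of (γ0, γ1)
  have hγ0nn : ∀ i j, 0 ≤ γ0 i j := by
    intro i j
    rw [hγ0]
    exact mul_nonneg (div_nonneg (hγnn i j) (hrow i).le) (hμ0 i).le
  have hγ1nn : ∀ i j, 0 ≤ γ1 i j := by
    intro i j
    rw [hγ1]
    exact mul_nonneg (div_nonneg (hγnn i j) (hcol j).le) (hμ1 j).le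
  have hrowγ0 : ∀ i, rowSum γ0 i = μ0 i := by
    intro i
    show (∑ j, γ0 i j) = μ0 i
    have : ∀ j ∈ Finset.univ, γ0 i j = γstar i j / rowSum γstar i * μ0 i :=
      fun j _ => hγ0 i j
    rw [Finset.sum_congr rfl this, ← Finset.sum_mul, ← Finset.sum_div]
    rw [show (∑ j, γstar i j) = rowSum γstar i from rfl, div_self (hrow i).ne', one_mul]
  have hcolγ1 : ∀ j, colSum γ1 j = μ1 j := by
    intro j
    show (∑ i, γ1 i j) = μ1 j
    have : ∀ i ∈ Finset.univ, γ1 i j = γstar i j / colSum γstar j * μ1 j :=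
      fun i _ => hγ1 i j
    rw [Finset.sum_congr rfl this, ← Finset.sum_mul, ← Finset.sum_div]
    rw [show (∑ i, γstar i j) = colSum γstar j from rfl, div_self (hcol j).ne', one_mul]
  have hmaskγ : ∀ i j, M i j = false → γ0 i j = 0 ∧ γ1 i j = 0 := by
    intro i j hf
    rw [hγ0, hγ1, hγsupp i j hf]
    simp
  refine ⟨⟨hγ0nn, hγ1nn, hrowγ0, hcolγ1, hmaskγ⟩, ?_⟩
  intro γ0' γ1' hfeas
  obtain ⟨h0nn, h1nn, h0row, h1col, hmask'⟩ := hfeas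
  -- WFR as 2δ² times a plain double sum
  have hW : ∀ a b : Fin K0 → Fin K1 → ℝ, WFRobj δ x y a b =
      2 * δ ^ 2 * ∑ i, ∑ j,
        (a i j + b i j - 2 * Real.sqrt (a i j * b i j) * c i j) := by
    intro a b
    rw [WFRobj, Finset.mul_sum]
    refine Finset.sum_congr rfl fun i _ => ?_
    rw [Finset.mul_sum]
  -- the comparison matrix γ'
  set γ' : Fin K0 → Fin K1 → ℝ :=
    fun i j => Real.sqrt (γ0' i j * γ1' i j) * c i j with hγ'def
  have hγ'nn : ∀ i j, 0 ≤ γ' i j := fun i j =>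
    mul_nonneg (Real.sqrt_nonneg _) (hcnn i j)
  have hγ'mask : ∀ i j, M i j = false → γ' i j = 0 := by
    intro i j hf
    show Real.sqrt (γ0' i j * γ1' i j) * c i j = 0
    rw [(hmask' i j hf).1, zero_mul, Real.sqrt_zero, zero_mul]
  -- Step 1 : S γ0 γ1 ≤ OET γstar
  have step1 : (∑ i, ∑ j, (γ0 i j + γ1 i j - 2 * Real.sqrt (γ0 i j * γ1 i j) * c i j))
      ≤ OETobj δ x y μ0 μ1 γstar := by
    have hKL0 : KLvec (rowSum γstar) μ0
        = ∑ i, ∑ j, (γstar i j * Real.log (rowSum γstar i / μ0 i) - γstar i j + γ0 i j) := by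
      rw [KLvec]
      refine Finset.sum_congr rfl fun i _ => ?_
      rw [Finset.sum_add_distrib, Finset.sum_sub_distrib, ← Finset.sum_mul]
      rw [show (∑ j, γstar i j) = rowSum γstar i from rfl,
          show (∑ j, γ0 i j) = rowSum γ0 i from rfl, hrowγ0 i]
    have hKL1 : KLvec (colSum γstar) μ1
        = ∑ i, ∑ j, (γstar i j * Real.log (colSum γstar j / μ1 j) - γstar i j + γ1 i j) := by
      rw [KLvec]
      rw [Finset.sum_comm]
      refine Finset.sum_congr rfl fun j _ => ?_
      rw [Finset.sum_add_distrib, Finset.sum_sub_distrib, ← Finset.sum_mul]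
      rw [show (∑ i, γstar i j) = colSum γstar j from rfl,
          show (∑ i, γ1 i j) = colSum γ1 j from rfl, hcolγ1 j]
    rw [OETobj, hKL0, hKL1, ← Finset.sum_add_distrib, ← Finset.sum_add_distrib]
    refine Finset.sum_le_sum fun i _ => ?_
    rw [← Finset.sum_add_distrib, ← Finset.sum_add_distrib]
    refine Finset.sum_le_sum fun j _ => ?_
    have hcc : 0 < γstar i j → 0 < c i j := by
      intro hg
      apply hcpos
      by_contra hfalse
      rw [Bool.not_eq_true] at hfalse
      rw [hγsupp i j hfalse] at hg
      exact lt_irrefl 0 hg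
    have := step1_pointwise (γstar i j) (rowSum γstar i) (colSum γstar j)
      (μ0 i) (μ1 j) (c i j) (hγnn i j) (hrow i) (hcol j) (hμ0 i) (hμ1 j)
      (hcnn i j) hcc
    rw [hγ0, hγ1]
    exact this
  -- Step 2 : OET γstar ≤ OET γ'
  have step2 : OETobj δ x y μ0 μ1 γstar ≤ OETobj δ x y μ0 μ1 γ' :=
    hopt γ' hγ'nn hγ'mask
  -- Step 3 : OET γ' ≤ S γ0' γ1'
  have step3 : OETobj δ x y μ0 μ1 γ'
      ≤ ∑ i, ∑ j, (γ0' i j + γ1' i j - 2 * Real.sqrt (γ0' i j * γ1' i j) * c i j) := by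
    have hKL0 : KLvec (rowSum γ') μ0 ≤ ∑ i, ∑ j, klterm (γ' i j) (γ0' i j) := by
      rw [KLvec]
      refine Finset.sum_le_sum fun i _ => ?_
      have hb : (0:ℝ) < ∑ j, γ0' i j := by
        rw [show (∑ j, γ0' i j) = rowSum γ0' i from rfl, h0row i]
        exact hμ0 i
      have := klterm_sum_le (fun j => γ' i j) (fun j => γ0' i j)
        (fun j => hγ'nn i j) (fun j => h0nn i j)
        (by
          intro j hj
          show Real.sqrt (γ0' i j * γ1' i j) * c i j = 0
          have hj' : γ0' i j = 0 := hj
          rw [hj', zero_mul, Real.sqrt_zero, zero_mul]) hb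
      rw [show (∑ j, γ0' i j) = rowSum γ0' i from rfl, h0row i] at this
      exact le_trans (le_of_eq (by rw [klterm]; rfl)) this
    have hKL1 : KLvec (colSum γ') μ1 ≤ ∑ i, ∑ j, klterm (γ' i j) (γ1' i j) := by
      rw [KLvec, Finset.sum_comm (s := Finset.univ) (t := Finset.univ)
        (f := fun i j => klterm (γ' i j) (γ1' i j))]
      refine Finset.sum_le_sum fun j _ => ?_
      have hb : (0:ℝ) < ∑ i, γ1' i j := by
        rw [show (∑ i, γ1' i j) = colSum γ1' j from rfl, h1col j]
        exact hμ1 j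
      have := klterm_sum_le (fun i => γ' i j) (fun i => γ1' i j)
        (fun i => hγ'nn i j) (fun i => h1nn i j)
        (by
          intro i hi
          show Real.sqrt (γ0' i j * γ1' i j) * c i j = 0
          have hi' : γ1' i j = 0 := hi
          rw [hi', mul_zero, Real.sqrt_zero, zero_mul]) hb
      rw [show (∑ i, γ1' i j) = colSum γ1' j from rfl, h1col j] at this
      exact le_trans (le_of_eq (by rw [klterm]; rfl)) this
    have hsum : (∑ i, ∑ j, (-2 * Real.log (c i j)) * γ' i j)
        + (∑ i, ∑ j, klterm (γ' i j) (γ0' i j))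
        + (∑ i, ∑ j, klterm (γ' i j) (γ1' i j))
        = ∑ i, ∑ j, (γ0' i j + γ1' i j - 2 * Real.sqrt (γ0' i j * γ1' i j) * c i j) := by
      rw [← Finset.sum_add_distrib, ← Finset.sum_add_distrib]
      refine Finset.sum_congr rfl fun i _ => ?_
      rw [← Finset.sum_add_distrib, ← Finset.sum_add_distrib]
      refine Finset.sum_congr rfl fun j _ => ?_
      exact klterm_sqrt (γ0' i j) (γ1' i j) (c i j) (h0nn i j) (h1nn i j) (hcnn i j)
    calc OETobj δ x y μ0 μ1 γ'
        ≤ (∑ i, ∑ j, (-2 * Real.log (c i j)) * γ' i j)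
          + (∑ i, ∑ j, klterm (γ' i j) (γ0' i j))
          + (∑ i, ∑ j, klterm (γ' i j) (γ1' i j)) := by
          rw [OETobj]
          gcongr
      _ = _ := hsum
  -- conclude
  rw [hW γ0 γ1, hW γ0' γ1']
  have h2δ : (0:ℝ) ≤ 2 * δ ^ 2 := by positivity
  exact mul_le_mul_of_nonneg_left (le_trans step1 (le_trans step2 step3)) h2δ
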